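/- Let {x^t} be generated by pDCAe with β_t ∈ [0,1), sup_t β_t < 1, applied to a level-bounded F = f + P₁ - P₂ with infimum v > -∞. Then Σ_{t=0}^∞ (1 - β_t²)‖x^t - x^{t-1}‖² < ∞, and consequently ‖x^{t+1} - x^t‖ → 0. -/

import Mathlib

open scoped RealInnerProductSpace

section Aux
open Set
variable {E : Type*} [NormedAddCommGroup E] [InnerProductSpace ℝ E] [CompleteSpace E]

lemma lem_combo (u w : E) (s : ℝ) :
    ‖(1-s) • u + s • w‖ ^ 2 = (1-s) * ‖u‖ ^ 2 + s * ‖w‖ ^ 2 - s * (1-s) * ‖u - w‖ ^ 2 := by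
  have h := real_inner_comm u w
  simp only [← real_inner_self_eq_norm_sq, inner_add_left, inner_add_right,
    inner_sub_left, inner_sub_right, real_inner_smul_left, real_inner_smul_right]
  ring_nf

lemma lem_slope {φ : ℝ → ℝ} {d : ℝ} (hφ : ConvexOn ℝ Set.univ φ)
    (hd : HasDerivAt φ d 0) : φ 0 + d ≤ φ 1 := by
  have := hφ.le_slope_of_hasDerivAt (mem_univ 0) (mem_univ 1) one_pos hd
  rw [slope_def_field] at this
  simp at this
  linarith

lemma lem_line_deriv {f : E → ℝ} {g : E} (a b : E) {s : ℝ}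
    (hg : HasGradientAt f g (a + s • (b - a))) :
    HasDerivAt (fun t : ℝ => f (a + t • (b - a))) ⟪g, b - a⟫ s := by
  have hc : HasDerivAt (fun t : ℝ => a + t • (b - a)) (b - a) s := by
    simpa using ((hasDerivAt_id s).smul_const (b - a)).const_add a
  have := (hg.hasFDerivAt).comp_hasDerivAt s hc
  exact this

lemma lem_convex_grad {f : E → ℝ} {g a : E} (hconv : ConvexOn ℝ Set.univ f)
    (hg : HasGradientAt f g a) (b : E) : f a + ⟪g, b - a⟫ ≤ f b := by
  have hφ : ConvexOn ℝ Set.univ (fun t : ℝ => f (a + t • (b - a))) := by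
    have h1 := hconv.comp_affineMap (AffineMap.lineMap a b)
    have h2 : (fun t : ℝ => f (a + t • (b - a))) = f ∘ (AffineMap.lineMap a b) := by
      funext t; simp [AffineMap.lineMap_apply, add_comm]
    rw [h2]; simpa using h1
  have hd : HasDerivAt (fun t : ℝ => f (a + t • (b - a))) ⟪g, b - a⟫ 0 :=
    lem_line_deriv a b (by simpa using hg)
  have := lem_slope hφ hd
  simpa using this

lemma lem_descent {f : E → ℝ} {f' : E → E} {L : ℝ} (hL : 0 < L)
    (hdiff : ∀ z, HasGradientAt f (f' z) z) (hlip : LipschitzWith L.toNNReal f')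
    (a b : E) : f b ≤ f a + ⟪f' a, b - a⟫ + L / 2 * ‖b - a‖ ^ 2 := by
  set d : ℝ := ⟪f' a, b - a⟫ with hd
  set K : ℝ := L * ‖b - a‖ ^ 2 with hK
  set ψ : ℝ → ℝ := fun s => f (a + s • (b - a)) - s * d - s ^ 2 * (K / 2) with hψ
  have hder : ∀ s : ℝ, HasDerivAt ψ (⟪f' (a + s • (b - a)), b - a⟫ - d - s * K) s := by
    intro s
    have h1 := lem_line_deriv a b (hdiff (a + s • (b - a)))
    have h2 : HasDerivAt (fun t : ℝ => t * d) d s := by simpa using (hasDerivAt_id s).mul_const d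
    have h3 : HasDerivAt (fun t : ℝ => t ^ 2 * (K / 2)) (s * K) s := by
      have := ((hasDerivAt_pow 2 s)).mul_const (K / 2)
      exact this.congr_deriv (by norm_num; ring)
    exact (h1.sub h2).sub h3
  have hlipR : ∀ s : ℝ, 0 ≤ s → ⟪f' (a + s • (b - a)) - f' a, b - a⟫ ≤ s * K := by
    intro s hs
    calc ⟪f' (a + s • (b - a)) - f' a, b - a⟫ ≤ ‖f' (a + s • (b - a)) - f' a‖ * ‖b - a‖ :=
          real_inner_le_norm _ _
      _ ≤ (L * ‖(a + s • (b - a)) - a‖) * ‖b - a‖ := by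
          have := hlip.dist_le_mul (a + s • (b - a)) a
          rw [dist_eq_norm, dist_eq_norm] at this
          have hL' : (L.toNNReal : ℝ) = L := Real.coe_toNNReal _ hL.le
          rw [hL'] at this
          exact mul_le_mul_of_nonneg_right this (norm_nonneg _)
      _ = s * K := by
          simp [norm_smul, abs_of_nonneg hs, hK]; ring
  have hanti : AntitoneOn ψ (Icc (0:ℝ) 1) := by
    apply antitoneOn_of_deriv_nonpos (convex_Icc 0 1)
    · exact fun s _ => ((hder s).differentiableAt).continuousAt.continuousWithinAt
    · intro s hs
      exact ((hder s).differentiableAt).differentiableWithinAt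
    · intro s hs
      rw [interior_Icc] at hs
      rw [(hder s).deriv]
      have := hlipR s hs.1.le
      have h5 : ⟪f' (a + s • (b - a)) - f' a, b - a⟫
          = ⟪f' (a + s • (b - a)), b - a⟫ - d := by rw [inner_sub_left]
      linarith [h5 ▸ this]
  have := hanti (by constructor <;> norm_num) (by constructor <;> norm_num) zero_le_one
  have h0 : ψ 0 = f a := by simp [hψ]
  have h1 : ψ 1 = f b - d - K / 2 := by simp [hψ]
  rw [h0, h1] at this
  linarith

lemma lem_strong_min {P : E → ℝ} (hP : ConvexOn ℝ Set.univ P) {g yv c : E} {L : ℝ} (hL : 0 < L)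
    (hmin : ∀ z, ⟪g, c⟫ + L / 2 * ‖c - yv‖ ^ 2 + P c ≤ ⟪g, z⟫ + L / 2 * ‖z - yv‖ ^ 2 + P z)
    (b : E) :
    ⟪g, c⟫ + L / 2 * ‖c - yv‖ ^ 2 + P c + L / 2 * ‖b - c‖ ^ 2 ≤
      ⟪g, b⟫ + L / 2 * ‖b - yv‖ ^ 2 + P b := by
  set φc : ℝ := ⟪g, c⟫ + L / 2 * ‖c - yv‖ ^ 2 + P c with hφc
  set φb : ℝ := ⟪g, b⟫ + L / 2 * ‖b - yv‖ ^ 2 + P b with hφb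
  set B : ℝ := ‖b - c‖ ^ 2 with hB
  have key : ∀ s ∈ Set.Ioo (0:ℝ) 1, φc + L / 2 * (1 - s) * B ≤ φb := by
    intro s hs
    set z : E := (1 - s) • c + s • b with hzdef
    have hz := hmin z
    have hP' : P z ≤ (1 - s) * P c + s * P b :=
      hP.2 (Set.mem_univ c) (Set.mem_univ b) (by linarith [hs.2]) hs.1.le (by ring)
    have hin : ⟪g, z⟫ = (1 - s) * ⟪g, c⟫ + s * ⟪g, b⟫ := by
      simp [hzdef, inner_add_right, real_inner_smul_right]
    have hzy : z - yv = (1 - s) • (c - yv) + s • (b - yv) := by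
      rw [hzdef]; module
    have hq : ‖z - yv‖ ^ 2 =
        (1 - s) * ‖c - yv‖ ^ 2 + s * ‖b - yv‖ ^ 2 - s * (1 - s) * B := by
      rw [hzy, lem_combo]
      have : (c - yv) - (b - yv) = c - b := by abel
      rw [this, hB, norm_sub_rev b c]
    rw [hin, hq] at hz
    have h5 : φc ≤ (1 - s) * φc + s * φb - L / 2 * s * (1 - s) * B := by
      have h4 : φc ≤ ((1 - s) * ⟪g, c⟫ + s * ⟪g, b⟫ + L / 2 * ((1 - s) * ‖c - yv‖ ^ 2
          + s * ‖b - yv‖ ^ 2 - s * (1 - s) * B)) + ((1 - s) * P c + s * P b) := by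
        linarith
      calc φc ≤ _ := h4
        _ = (1 - s) * φc + s * φb - L / 2 * s * (1 - s) * B := by rw [hφc, hφb]; ring
    have h6 : s * (φc + L / 2 * (1 - s) * B) ≤ s * φb := by linarith [h5]
    exact le_of_mul_le_mul_left h6 hs.1
  have hlim : Filter.Tendsto (fun s : ℝ => φc + L / 2 * (1 - s) * B) (nhdsWithin 0 (Set.Ioi 0))
      (nhds (φc + L / 2 * (1 - 0) * B)) := by
    apply tendsto_nhdsWithin_of_tendsto_nhds
    exact (Continuous.tendsto (by continuity) 0)
  have hev : ∀ᶠ s in nhdsWithin (0:ℝ) (Set.Ioi 0), φc + L / 2 * (1 - s) * B ≤ φb := by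
    filter_upwards [Ioo_mem_nhdsGT_of_mem (Set.left_mem_Ico.2 zero_lt_one)] with s hs
    exact key s hs
  have := le_of_tendsto hlim hev
  simpa using this

end Aux

/-- pDCAe: summability of `(1-β_t²)‖x^t - x^{t-1}‖²` and vanishing successive differences.
Here `x 0` plays the role of `x⁻¹` and `x (t+1)` of `x^t`. -/
theorem stmt5 {n : ℕ} (L : ℝ) (hL : 0 < L)
    (f : EuclideanSpace ℝ (Fin n) → ℝ)
    (f' : EuclideanSpace ℝ (Fin n) → EuclideanSpace ℝ (Fin n))
    (hconv : ConvexOn ℝ Set.univ f)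
    (hdiff : ∀ x, HasGradientAt f (f' x) x)
    (hlip : LipschitzWith L.toNNReal f')
    (P₁ P₂ : EuclideanSpace ℝ (Fin n) → ℝ)
    (hP₁conv : ConvexOn ℝ Set.univ P₁) (hP₁lsc : LowerSemicontinuous P₁)
    (hP₂conv : ConvexOn ℝ Set.univ P₂) (hP₂cont : Continuous P₂)
    (hlevel : ∀ r : ℝ, Bornology.IsBounded {z | f z + P₁ z - P₂ z ≤ r})
    (v : ℝ) (hv : ∀ z, v ≤ f z + P₁ z - P₂ z)
    (x y ξ : ℕ → EuclideanSpace ℝ (Fin n)) (β : ℕ → ℝ)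
    (hβ : ∀ t, β t ∈ Set.Ico (0 : ℝ) 1)
    (hsup : ∃ c < (1 : ℝ), ∀ t, β t ≤ c)
    (hinit : x 0 = x 1)
    (hξ : ∀ t z, P₂ (x (t+1)) + ⟪ξ t, z - x (t+1)⟫ ≤ P₂ z)
    (hy : ∀ t, y t = x (t+1) + β t • (x (t+1) - x t))
    (hmin : ∀ t z, ⟪f' (y t) - ξ t, x (t+2)⟫ + L / 2 * ‖x (t+2) - y t‖ ^ 2 + P₁ (x (t+2)) ≤
      ⟪f' (y t) - ξ t, z⟫ + L / 2 * ‖z - y t‖ ^ 2 + P₁ z) :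
    Summable (fun t => (1 - β t ^ 2) * ‖x (t+1) - x t‖ ^ 2) ∧
      Filter.Tendsto (fun t => ‖x (t+1) - x t‖) Filter.atTop (nhds 0) := by
  set En : ℕ → ℝ := fun t =>
    (f (x (t+1)) + P₁ (x (t+1)) - P₂ (x (t+1))) + L / 2 * ‖x (t+1) - x t‖ ^ 2 with hEn
  have key : ∀ t, L / 2 * (1 - β t ^ 2) * ‖x (t+1) - x t‖ ^ 2 ≤ En t - En (t+1) := by
    intro t
    have hstrong := lem_strong_min hP₁conv hL (hmin t) (x (t+1))
    have hdesc := lem_descent hL hdiff hlip (y t) (x (t+2))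
    have hcvx := lem_convex_grad hconv (hdiff (y t)) (x (t+1))
    have hsub := hξ t (x (t+2))
    have hby : ‖x (t+1) - y t‖ ^ 2 = β t ^ 2 * ‖x (t+1) - x t‖ ^ 2 := by
      rw [hy t]
      have h9 : x (t+1) - (x (t+1) + β t • (x (t+1) - x t)) = -(β t • (x (t+1) - x t)) := by
        abel
      rw [h9, norm_neg, norm_smul, Real.norm_eq_abs, abs_of_nonneg (hβ t).1, mul_pow]
    have hcb : ‖x (t+1) - x (t+2)‖ ^ 2 = ‖x (t+2) - x (t+1)‖ ^ 2 := by
      rw [norm_sub_rev]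
    simp only [inner_sub_left, inner_sub_right] at hstrong hdesc hcvx hsub
    rw [hby, hcb] at hstrong
    simp only [hEn, show ∀ m : ℕ, m + 1 + 1 = m + 2 from fun m => rfl]
    linarith [hstrong, hdesc, hcvx, hsub]
  have hnonneg : ∀ t, 0 ≤ (1 - β t ^ 2) * ‖x (t+1) - x t‖ ^ 2 := by
    intro t
    have h1 := (hβ t).1; have h2 := (hβ t).2
    have : 0 ≤ 1 - β t ^ 2 := by nlinarith
    positivity
  have hEv : ∀ t, v ≤ En t := by
    intro t
    have h1 := hv (x (t+1))
    have h2 : 0 ≤ L / 2 * ‖x (t+1) - x t‖ ^ 2 := by positivity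
    simp only [hEn]; linarith
  have hbound : ∀ N : ℕ, ∑ i ∈ Finset.range N, (1 - β i ^ 2) * ‖x (i+1) - x i‖ ^ 2 ≤
      (En 0 - v) * (2 / L) := by
    intro N
    have h1 : ∑ i ∈ Finset.range N, L / 2 * ((1 - β i ^ 2) * ‖x (i+1) - x i‖ ^ 2) ≤
        En 0 - En N := by
      calc ∑ i ∈ Finset.range N, L / 2 * ((1 - β i ^ 2) * ‖x (i+1) - x i‖ ^ 2)
          ≤ ∑ i ∈ Finset.range N, (En i - En (i+1)) := by
            apply Finset.sum_le_sum
            intro i _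
            have := key i
            linarith [this]
        _ = En 0 - En N := Finset.sum_range_sub' En N
    have h2 : ∑ i ∈ Finset.range N, L / 2 * ((1 - β i ^ 2) * ‖x (i+1) - x i‖ ^ 2) =
        L / 2 * ∑ i ∈ Finset.range N, (1 - β i ^ 2) * ‖x (i+1) - x i‖ ^ 2 := by
      rw [Finset.mul_sum]
    have h3 := hEv N
    rw [h2] at h1
    have hL2 : 0 < L / 2 := by positivity
    calc ∑ i ∈ Finset.range N, (1 - β i ^ 2) * ‖x (i+1) - x i‖ ^ 2
        = (L / 2 * ∑ i ∈ Finset.range N, (1 - β i ^ 2) * ‖x (i+1) - x i‖ ^ 2) * (2 / L) := by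
          field_simp
      _ ≤ (En 0 - v) * (2 / L) := by
          exact mul_le_mul_of_nonneg_right (h1.trans (sub_le_sub_left h3 (En 0)))
            (by positivity)
  have hsummable : Summable (fun t => (1 - β t ^ 2) * ‖x (t+1) - x t‖ ^ 2) :=
    summable_of_sum_range_le hnonneg hbound
  refine ⟨hsummable, ?_⟩
  obtain ⟨cc, hcc1, hcc2⟩ := hsup
  have hc0 : 0 ≤ cc := le_trans (hβ 0).1 (hcc2 0)
  have hpos : 0 < 1 - cc ^ 2 := by nlinarith
  have hT0 := hsummable.tendsto_atTop_zero
  have hub : ∀ t, ‖x (t+1) - x t‖ ^ 2 ≤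
      ((1 - β t ^ 2) * ‖x (t+1) - x t‖ ^ 2) / (1 - cc ^ 2) := by
    intro t
    have h8 : 0 ≤ (cc ^ 2 - β t ^ 2) * ‖x (t+1) - x t‖ ^ 2 := by
      apply mul_nonneg _ (by positivity)
      nlinarith [(hβ t).1, hcc2 t]
    rw [le_div_iff₀ hpos]
    nlinarith [h8]
  have hsq : Filter.Tendsto (fun t => ‖x (t+1) - x t‖ ^ 2) Filter.atTop (nhds 0) := by
    apply squeeze_zero (fun t => by positivity) hub
    have := hT0.div_const (1 - cc ^ 2)
    simpa using this
  have hfin := (Real.continuous_sqrt.tendsto 0).comp hsq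
  have heq : (fun t => Real.sqrt (‖x (t+1) - x t‖ ^ 2)) = fun t => ‖x (t+1) - x t‖ := by
    funext t; exact Real.sqrt_sq (norm_nonneg _)
  have : Filter.Tendsto (fun t => Real.sqrt (‖x (t+1) - x t‖ ^ 2)) Filter.atTop
      (nhds (Real.sqrt 0)) := hfin
  rw [heq, Real.sqrt_zero] at this
  exact this
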